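/- Let G be a connected graph, t ≤ δ(G) with t ≥ 3, d = dyn_t(G), and n ≥ t. Then dyn_t(G □ K_n) ≤ td − (t² − 3t)/2 − d. -/

import Mathlib

open SimpleGraph

/-- One step of the activation process: add every vertex having at least `τ v` active neighbors. -/
def activStep {V : Type*} (G : SimpleGraph V) (τ : V → ℕ) (A : Set V) : Set V :=
  A ∪ {v | τ v ≤ (G.neighborSet v ∩ A).ncard}

/-- `D` is a `τ`-dynamic monopoly: iterating the activation process from `D` activates all of `V`. -/
def IsDynMonopoly {V : Type*} (G : SimpleGraph V) (τ : V → ℕ) (D : Set V) : Prop :=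
  ∃ k : ℕ, (activStep G τ)^[k] D = Set.univ

/-- The `τ`-dynamic monopoly number: least cardinality of a `τ`-dynamic monopoly. -/
noncomputable def dynNum {V : Type*} (G : SimpleGraph V) (τ : V → ℕ) : ℕ :=
  sInf {k | ∃ D : Set V, IsDynMonopoly G τ D ∧ D.ncard = k}

/-- Dynamic monopoly number with constant threshold `t`. -/
noncomputable def dynNumC {V : Type*} (G : SimpleGraph V) (t : ℕ) : ℕ :=
  dynNum G (fun _ => t)
section Basics
variable {V : Type*} {G : SimpleGraph V} {τ : V → ℕ} {D : Set V}

lemma subset_activStep (A : Set V) : A ⊆ activStep G τ A := Set.subset_union_left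

lemma iter_le_iter {k m : ℕ} (h : k ≤ m) :
    (activStep G τ)^[k] D ⊆ (activStep G τ)^[m] D := by
  induction m with
  | zero => simp_all
  | succ m ih =>
    rcases Nat.lt_or_ge k (m+1) with h' | h'
    · rw [Function.iterate_succ_apply']
      exact (ih (Nat.lt_succ_iff.mp h')).trans (subset_activStep _)
    · have : k = m + 1 := le_antisymm h h'
      subst this; rfl

def good (G : SimpleGraph V) (τ : V → ℕ) (D : Set V) : Set V :=
  ⋃ k, (activStep G τ)^[k] D

lemma iter_subset_good (k : ℕ) : (activStep G τ)^[k] D ⊆ good G τ D :=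
  fun x hx => Set.mem_iUnion.mpr ⟨k, hx⟩

lemma seed_subset_good : D ⊆ good G τ D := iter_subset_good 0

lemma finite_subset_good {s : Set V} (hfin : s.Finite) (hs : s ⊆ good G τ D) :
    ∃ K, s ⊆ (activStep G τ)^[K] D := by
  revert hs
  refine Set.Finite.induction_on (motive := fun s _ => s ⊆ good G τ D → ∃ K, s ⊆ (activStep G τ)^[K] D) _ hfin (fun _ => ⟨0, by simp⟩) ?_
  intro a s ha hsf ih hs
  obtain ⟨K, hK⟩ := ih (fun x hx => hs (Set.mem_insert_of_mem _ hx))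
  obtain ⟨k, hk⟩ := Set.mem_iUnion.mp (hs (Set.mem_insert _ _))
  exact ⟨max k K, Set.insert_subset (iter_le_iter (le_max_left _ _) hk)
    (hK.trans (iter_le_iter (le_max_right _ _)))⟩

lemma good_closed [Finite V] {v : V}
    (h : τ v ≤ (G.neighborSet v ∩ good G τ D).ncard) : v ∈ good G τ D := by
  obtain ⟨K, hK⟩ := finite_subset_good (Set.toFinite _)
    (Set.inter_subset_right : G.neighborSet v ∩ good G τ D ⊆ _)
  apply iter_subset_good (K + 1)
  rw [Function.iterate_succ_apply']
  refine Or.inr ?_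
  calc τ v ≤ (G.neighborSet v ∩ good G τ D).ncard := h
    _ ≤ (G.neighborSet v ∩ (activStep G τ)^[K] D).ncard :=
      Set.ncard_le_ncard (Set.subset_inter Set.inter_subset_left hK) (Set.toFinite _)

lemma isDynMonopoly_of_good [Finite V] (h : good G τ D = Set.univ) :
    IsDynMonopoly G τ D := by
  obtain ⟨K, hK⟩ := finite_subset_good (Set.toFinite Set.univ) (h.symm.subset)
  exact ⟨K, Set.eq_univ_of_univ_subset hK⟩

lemma dynNum_le (hD : IsDynMonopoly G τ D) : dynNum G τ ≤ D.ncard :=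
  Nat.sInf_le ⟨D, hD, rfl⟩

/-- closed sets containing (most of) a monopoly are everything -/
lemma G_side [Finite V] {t j : ℕ} {X F : Set V}
    (hD : IsDynMonopoly G (fun _ => t) D) (hX : X.ncard ≤ j)
    (hδ : ∀ v, t ≤ (G.neighborSet v).ncard)
    (hF : ∀ v, t - j ≤ (G.neighborSet v ∩ F).ncard → v ∈ F)
    (hDF : D \ X ⊆ F) : ∀ v, v ∈ F := by
  have key : ∀ k, (activStep G (fun _ => t))^[k] D \ X ⊆ F := by
    intro k
    induction k with
    | zero => exact hDF
    | succ k ih =>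
      rw [Function.iterate_succ_apply']
      rintro v ⟨hv, hvX⟩
      rcases hv with hv | hv
      · exact ih ⟨hv, hvX⟩
      · apply hF
        have h1 : (G.neighborSet v ∩ (activStep G (fun _ => t))^[k] D) \ X ⊆
            G.neighborSet v ∩ F := by
          rintro u ⟨⟨hu1, hu2⟩, hu3⟩
          exact ⟨hu1, ih ⟨hu2, hu3⟩⟩
        calc t - j ≤ (G.neighborSet v ∩ (activStep G (fun _ => t))^[k] D).ncard - X.ncard :=
              tsub_le_tsub hv hX
          _ ≤ ((G.neighborSet v ∩ (activStep G (fun _ => t))^[k] D) \ X).ncard :=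
              Set.le_ncard_diff _ _ (Set.toFinite _)
          _ ≤ (G.neighborSet v ∩ F).ncard := Set.ncard_le_ncard h1 (Set.toFinite _)
  obtain ⟨K, hK⟩ := hD
  have huniv : Set.univ \ X ⊆ F := hK ▸ key K
  intro v
  apply hF
  have h2 : G.neighborSet v \ X ⊆ G.neighborSet v ∩ F := by
    rintro u ⟨hu1, hu2⟩
    exact ⟨hu1, huniv ⟨trivial, hu2⟩⟩
  calc t - j ≤ (G.neighborSet v).ncard - X.ncard := tsub_le_tsub (hδ v) hX
    _ ≤ (G.neighborSet v \ X).ncard := Set.le_ncard_diff _ _ (Set.toFinite _)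
    _ ≤ (G.neighborSet v ∩ F).ncard := Set.ncard_le_ncard h2 (Set.toFinite _)

lemma conn_side [Finite V] (hc : G.Preconnected) {F : Set V}
    (hF : ∀ v, 1 ≤ (G.neighborSet v ∩ F).ncard → v ∈ F) {w : V} (hw : w ∈ F) :
    ∀ v, v ∈ F := by
  have main : ∀ {a b : V} (_ : G.Walk a b), a ∈ F → b ∈ F := by
    intro a b p
    induction p with
    | nil => exact id
    | @cons a b c h q ih =>
      intro ha
      refine ih (hF b ?_)
      have : a ∈ G.neighborSet b ∩ F := ⟨h.symm, ha⟩
      have hpos : 0 < (G.neighborSet b ∩ F).ncard :=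
        (Set.ncard_pos (Set.toFinite _)).mpr ⟨a, this⟩
      omega
  intro v
  obtain ⟨p⟩ := hc w v
  exact main p hw

lemma t_le_card_monopoly [Finite V] [Nonempty V] {t : ℕ}
    (hD : IsDynMonopoly G (fun _ => t) D)
    (hδ : ∀ v, t ≤ (G.neighborSet v).ncard) : t ≤ D.ncard := by
  by_contra h
  push_neg at h
  have hfix : activStep G (fun _ => t) D = D := by
    apply Set.eq_of_subset_of_subset _ (subset_activStep _)
    rintro v (hv | hv)
    · exact hv
    · exfalso
      have h2 : (G.neighborSet v ∩ D).ncard ≤ D.ncard :=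
        Set.ncard_le_ncard Set.inter_subset_right (Set.toFinite _)
      have h3 : t ≤ (G.neighborSet v ∩ D).ncard := hv
      omega
  have hiter : ∀ k, (activStep G (fun _ => t))^[k] D = D := by
    intro k
    induction k with
    | zero => rfl
    | succ k ih => rw [Function.iterate_succ_apply', ih, hfix]
  obtain ⟨K, hK⟩ := hD
  rw [hiter K] at hK
  have v := Classical.arbitrary V
  have h4 : (G.neighborSet v).ncard ≤ D.ncard :=
    Set.ncard_le_ncard (hK ▸ Set.subset_univ _) (Set.toFinite _)
  have := hδ v
  omega

end Basics

lemma ncard_fin_lt {n j : ℕ} (h : j ≤ n) : {i : Fin n | (i : ℕ) < j}.ncard = j := by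
  have heq : {i : Fin n | (i : ℕ) < j} = (Fin.castLE h) '' Set.univ := by
    ext i
    simp only [Set.mem_setOf_eq, Set.image_univ, Set.mem_range]
    constructor
    · intro hi; exact ⟨⟨(i : ℕ), hi⟩, by ext; simp⟩
    · rintro ⟨m, rfl⟩; exact m.isLt
  rw [heq, Set.ncard_image_of_injective _ (Fin.castLE_injective h), Set.ncard_univ,
    Nat.card_eq_fintype_card, Fintype.card_fin]

lemma prod_step {V : Type*} [Fintype V] {G : SimpleGraph V} {n t j : ℕ}
    {S : Set (V × Fin n)} {B : Set V} (v : V) (r : Fin n)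
    (hjt : j ≤ t) (hjn : j ≤ n) (hjr : j ≤ (r : ℕ))
    (hB : ∀ u ∈ B, G.Adj v u ∧ (u, r) ∈ good (G.boxProd (completeGraph (Fin n))) (fun _ => t) S)
    (hrows : ∀ i : Fin n, (i : ℕ) < j →
      (v, i) ∈ good (G.boxProd (completeGraph (Fin n))) (fun _ => t) S)
    (hcard : t - j ≤ B.ncard) :
    (v, r) ∈ good (G.boxProd (completeGraph (Fin n))) (fun _ => t) S := by
  set H := G.boxProd (completeGraph (Fin n)) with hH
  apply good_closed
  set A1 : Set (V × Fin n) := (fun u => (u, r)) '' B with hA1def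
  set A2 : Set (V × Fin n) := (fun i => (v, i)) '' {i : Fin n | (i : ℕ) < j} with hA2def
  have hsub : A1 ∪ A2 ⊆ H.neighborSet (v, r) ∩ good H (fun _ => t) S := by
    rintro p (⟨u, hu, rfl⟩ | ⟨i, hi, rfl⟩)
    · refine ⟨?_, (hB u hu).2⟩
      show H.Adj (v, r) (u, r)
      rw [hH, SimpleGraph.boxProd_adj]
      exact Or.inl ⟨(hB u hu).1, rfl⟩
    · refine ⟨?_, hrows i hi⟩
      show H.Adj (v, r) (v, i)
      rw [hH, SimpleGraph.boxProd_adj]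
      refine Or.inr ⟨?_, rfl⟩
      simp only [Set.mem_setOf_eq] at hi
      simp only [completeGraph, SimpleGraph.top_adj]
      intro hri
      have : (r : ℕ) = (i : ℕ) := congrArg Fin.val hri
      omega
  have hdisj : Disjoint A1 A2 := by
    rw [Set.disjoint_left]
    rintro p ⟨u, hu, rfl⟩ ⟨i, hi, he⟩
    have : (r : ℕ) = (i : ℕ) := congrArg Fin.val (congrArg Prod.snd he).symm
    simp only [Set.mem_setOf_eq] at hi
    omega
  have hA1 : A1.ncard = B.ncard :=
    Set.ncard_image_of_injective _ (fun a b h => by simpa using congrArg Prod.fst h)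
  have hA2 : A2.ncard = j := by
    rw [hA2def, Set.ncard_image_of_injective _ (fun a b h => by simpa using congrArg Prod.snd h),
      ncard_fin_lt hjn]
  have hle := Set.ncard_le_ncard hsub (Set.toFinite _)
  rw [Set.ncard_union_eq hdisj (Set.toFinite _) (Set.toFinite _), hA1, hA2] at hle
  show t ≤ _
  omega


/-- For a connected graph `G`, `3 ≤ t ≤ δ(G)` and `n ≥ t`,
`dyn_t(G □ K_n) ≤ t·d − (t² − 3t)/2 − d`, where `d = dyn_t(G)`. -/
theorem dyn_boxProd_complete {V : Type*} [Fintype V] (G : SimpleGraph V)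
    (hconn : G.Connected) (t n : ℕ) (ht : 3 ≤ t)
    (hδ : ∀ v, t ≤ (G.neighborSet v).ncard) (hn : t ≤ n) :
    (dynNumC (G.boxProd (completeGraph (Fin n))) t : ℤ) ≤
      (t : ℤ) * (dynNumC G t : ℤ) - ((t : ℤ) ^ 2 - 3 * (t : ℤ)) / 2 - (dynNumC G t : ℤ) := by
  classical
  haveI hV : Nonempty V := hconn.nonempty
  set d := dynNumC G t with hddef
  obtain ⟨D, hDmono, hDcard⟩ :
      ∃ D : Set V, IsDynMonopoly G (fun _ => t) D ∧ D.ncard = d := by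
    have hne : {k | ∃ D : Set V, IsDynMonopoly G (fun _ => t) D ∧ D.ncard = k}.Nonempty :=
      ⟨Set.univ.ncard, Set.univ, ⟨0, rfl⟩, rfl⟩
    exact Nat.sInf_mem hne
  have htd : t ≤ d := hDcard ▸ t_le_card_monopoly hDmono hδ
  have hn0 : 0 < n := by omega
  set row : ℕ → Fin n := fun j => ⟨j % n, Nat.mod_lt j hn0⟩ with hrowdef
  have hrow : ∀ j, j < n → ((row j : Fin n) : ℕ) = j := fun j hj => Nat.mod_eq_of_lt hj
  have hEex : ∀ j : ℕ, ∃ B ⊆ D.toFinset, B.card = d - j := by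
    intro j
    refine Finset.exists_subset_card_eq ?_
    rw [← Set.ncard_eq_toFinset_card', hDcard]
    omega
  choose E hE1 hE2 using hEex
  set w := Classical.arbitrary V with hwdef
  set H := G.boxProd (completeGraph (Fin n)) with hHdef
  set Sfin : Finset (V × Fin n) :=
    ((Finset.range (t-1)).biUnion fun j => (E j).image fun u => (u, row j)) ∪
      {(w, row (t-1))} with hSdef
  set GOOD := good H (fun _ => t) (↑Sfin : Set (V × Fin n)) with hGOODdef
  have hmemE : ∀ j, j < t - 1 → ∀ u ∈ E j, ((u, row j) : V × Fin n) ∈ GOOD := by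
    intro j hj u hu
    apply seed_subset_good
    rw [Finset.mem_coe, hSdef]
    exact Finset.mem_union_left _
      (Finset.mem_biUnion.mpr ⟨j, Finset.mem_range.mpr hj, Finset.mem_image_of_mem _ hu⟩)
  have hmemw : ((w, row (t-1)) : V × Fin n) ∈ GOOD := by
    apply seed_subset_good
    rw [Finset.mem_coe, hSdef]
    exact Finset.mem_union_right _ (Finset.mem_singleton_self _)
  -- rows 0 .. t-2 become fully active
  have fullrow : ∀ j, j < t - 1 → ∀ v : V, ((v, row j) : V × Fin n) ∈ GOOD := by
    intro j
    induction j using Nat.strong_induction_on with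
    | _ j ih =>
      intro hj v
      have hjn : j < n := by omega
      refine G_side (t := t) (j := j) (X := D \ (↑(E j) : Set V)) (F := {x : V | ((x, row j) : V × Fin n) ∈ GOOD}) hDmono ?_ hδ ?_ ?_ v
      · -- (D \ ↑(E j)).ncard ≤ j
        have hsub : (↑(E j) : Set V) ⊆ D := by
          intro x hx
          have := hE1 j (Finset.mem_coe.mp hx)
          exact Set.mem_toFinset.mp this
        rw [Set.ncard_diff hsub (Set.toFinite _), Set.ncard_coe_finset, hE2, hDcard]
        omega
      · intro u hu
        show ((u, row j) : V × Fin n) ∈ GOOD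
        refine prod_step (j := j) u (row j) (by omega) (by omega) ?_ ?_ ?_ hu
        · rw [hrow j hjn]
        · exact fun x hx => ⟨hx.1, hx.2⟩
        · intro i hi
          have h1 := ih (i : ℕ) (by omega) (by omega) u
          have h2 : row (i : ℕ) = i := Fin.val_injective (hrow _ i.isLt)
          rwa [h2] at h1
      · intro x hx
        have hxE : x ∈ E j := by
          by_contra hcon
          exact hx.2 ⟨hx.1, fun hc => hcon (Finset.mem_coe.mp hc)⟩
        exact hmemE j hj x hxE
  -- row t-1 becomes fully active
  have fulllast : ∀ v : V, ((v, row (t-1)) : V × Fin n) ∈ GOOD := by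
    refine conn_side (F := {x : V | ((x, row (t-1)) : V × Fin n) ∈ GOOD})
      hconn.preconnected ?_ hmemw
    intro u hu
    show ((u, row (t-1)) : V × Fin n) ∈ GOOD
    refine prod_step (j := t-1) (B := G.neighborSet u ∩ {x : V | ((x, row (t-1)) : V × Fin n) ∈ GOOD}) u (row (t-1)) (by omega) (by omega) ?_ ?_ ?_ ?_
    · rw [hrow (t-1) (by omega)]
    · exact fun x hx => ⟨hx.1, hx.2⟩
    · intro i hi
      have h1 := fullrow (i : ℕ) hi u
      have h2 : row (i : ℕ) = i := Fin.val_injective (hrow _ i.isLt)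
      rwa [h2] at h1
    · omega
  -- everything becomes active
  have hfull : ∀ p : V × Fin n, p ∈ GOOD := by
    rintro ⟨v, i⟩
    rcases lt_or_ge (i : ℕ) (t-1) with hi | hi
    · have h1 := fullrow (i : ℕ) hi v
      have h2 : row (i : ℕ) = i := Fin.val_injective (hrow _ i.isLt)
      rwa [h2] at h1
    · rcases eq_or_lt_of_le hi with hi' | hi'
      · have h1 := fulllast v
        have h2 : row (t-1) = i := Fin.val_injective (by rw [hrow (t-1) (by omega)]; omega)
        rwa [h2] at h1
      · refine prod_step (j := t) (B := (∅ : Set V)) v i le_rfl hn (by omega)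
          (fun x hx => absurd hx (Set.notMem_empty x)) ?_ (by simp)
        intro i' hi'
        rcases lt_or_ge (i' : ℕ) (t-1) with h | h
        · have h1 := fullrow (i' : ℕ) h v
          have h2 : row (i' : ℕ) = i' := Fin.val_injective (hrow _ i'.isLt)
          rwa [h2] at h1
        · have h1 := fulllast v
          have h2 : row (t-1) = i' := Fin.val_injective (by rw [hrow (t-1) (by omega)]; omega)
          rwa [h2] at h1
  have hmono : IsDynMonopoly H (fun _ => t) (↑Sfin : Set (V × Fin n)) :=
    isDynMonopoly_of_good (Set.eq_univ_of_forall hfull)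
  have hle : dynNumC H t ≤ Sfin.card := by
    rw [← Set.ncard_coe_finset]
    exact dynNum_le hmono
  -- cardinality bound
  have hcard1 : Sfin.card ≤ (∑ j ∈ Finset.range (t-1), (d - j)) + 1 := by
    rw [hSdef]
    refine (Finset.card_union_le _ _).trans ?_
    have h1 : ((Finset.range (t-1)).biUnion fun j => (E j).image fun u => (u, row j)).card ≤
        ∑ j ∈ Finset.range (t-1), (d - j) := by
      refine (Finset.card_biUnion_le).trans ?_
      refine Finset.sum_le_sum fun j _ => ?_
      exact (Finset.card_image_le).trans (le_of_eq (hE2 j))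
    simpa using add_le_add h1 (le_refl 1)
  have hsum : (∑ j ∈ Finset.range (t-1), (d - j)) + (∑ j ∈ Finset.range (t-1), j)
      = (t-1) * d := by
    rw [← Finset.sum_add_distrib]
    rw [Finset.sum_congr rfl fun j hj => Nat.sub_add_cancel
      (by have := Finset.mem_range.mp hj; omega : j ≤ d)]
    rw [Finset.sum_const, Finset.card_range, smul_eq_mul]
  have hgauss : (∑ j ∈ Finset.range (t-1), j) * 2 = (t-1) * (t-2) := by
    rw [Finset.sum_range_id_mul_two]
    have h12 : t - 1 - 1 = t - 2 := by omega
    rw [h12]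
  -- arithmetic finish
  set a := ∑ j ∈ Finset.range (t-1), (d - j) with hadef
  set b := ∑ j ∈ Finset.range (t-1), j with hbdef
  have hq : ((t:ℤ)^2 - 3*(t:ℤ)) / 2 * 2 = (t:ℤ)^2 - 3*(t:ℤ) := by
    refine Int.ediv_mul_cancel ?_
    obtain ⟨c, hc⟩ := Int.even_mul_succ_self (t : ℤ)
    exact ⟨c - 2*t, by linarith⟩
  have c1 : (dynNumC H t : ℤ) ≤ (Sfin.card : ℤ) := Nat.cast_le.mpr hle
  have c2 : (Sfin.card : ℤ) ≤ (a : ℤ) + 1 := by exact_mod_cast hcard1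
  have c3 : (a : ℤ) + (b : ℤ) = ((t:ℤ) - 1) * d := by
    have := congrArg (Nat.cast (R := ℤ)) hsum
    push_cast at this
    rw [Nat.cast_sub (by omega : 1 ≤ t)] at this
    push_cast at this
    linarith [this]
  have c4 : (b : ℤ) * 2 = ((t:ℤ) - 1) * ((t:ℤ) - 2) := by
    have := congrArg (Nat.cast (R := ℤ)) hgauss
    push_cast at this
    rw [Nat.cast_sub (by omega : 1 ≤ t), Nat.cast_sub (by omega : 2 ≤ t)] at this
    push_cast at this
    linarith [this]
  nlinarith [c1, c2, c3, c4, hq]
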